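/- Consider the flat Lorentzian metric g = ε_i(dxⁱ)² with ε₁ = −1, ε₂ = ε₃ = ε₄ = +1 on a 4-dimensional manifold. The space of Jacobi fields along g for the Einstein–Hilbert Lagrangian whose components are homogeneous quadratic polynomials in the coordinates x¹,…,x⁴ is a vector space of dimension 90. -/

import Mathlib

noncomputable section

open scoped BigOperators

/-- The Lorentzian signs `ε₁ = −1`, `ε₂ = ε₃ = ε₄ = +1`. -/
def εL : Fin 4 → ℝ := fun i => if i = 0 then -1 else 1

/-- Second partial derivative `∂²V^{ab}/∂xⁱ∂xʲ` of a vertical field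
`V = Σ_{a≤b} V^{ab} ∂/∂y_{ab}` along the flat metric. -/
noncomputable def pd2V (V : (Fin 4 → ℝ) → Fin 4 → Fin 4 → ℝ)
    (a b i j : Fin 4) (x : Fin 4 → ℝ) : ℝ :=
  fderiv ℝ (fun x' =>
    fderiv ℝ (fun x'' => V x'' a b) x' (Pi.single i 1)) x (Pi.single j 1)

/-- The Jacobi equations of the Einstein–Hilbert Lagrangian along the flat
Lorentzian metric `g = ε_i (dxⁱ)²`: the constant-coefficient system
`Σ_B P^A_B(D) U^B = 0`. -/
def IsJacobiFlat (V : (Fin 4 → ℝ) → Fin 4 → Fin 4 → ℝ) : Prop :=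
  (∀ x a b, V x a b = V x b a) ∧
  ∀ (μ ν : Fin 4) (x : Fin 4 → ℝ),
    (∑ i, εL i / 2 *
      (pd2V V ν i i μ x + pd2V V μ i i ν x
        - pd2V V i i μ ν x - pd2V V μ ν i i x)) = 0

/-- `V` has homogeneous quadratic polynomial components. -/
def IsQuadratic (V : (Fin 4 → ℝ) → Fin 4 → Fin 4 → ℝ) : Prop :=
  ∃ c : Fin 4 → Fin 4 → Fin 4 → Fin 4 → ℝ,
    ∀ x a b, V x a b = ∑ j, ∑ k, c a b j k * x j * x k

namespace S19

open ContinuousLinearMap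

abbrev I : Type := {p : Fin 4 × Fin 4 // p.1 ≤ p.2}

abbrev C : Type := I × I → ℝ

def σ (a b : Fin 4) : I := if h : a ≤ b then ⟨(a, b), h⟩ else ⟨(b, a), le_of_not_ge h⟩

lemma σ_symm (a b : Fin 4) : σ a b = σ b a := by
  unfold σ
  rcases le_or_gt a b with h | h
  · rcases eq_or_lt_of_le h with rfl | h'
    · rfl
    · rw [dif_pos h, dif_neg (not_le.mpr h')]
  · rw [dif_neg (not_le.mpr h), dif_pos h.le]

lemma σ_of_le {a b : Fin 4} (h : a ≤ b) : σ a b = ⟨(a, b), h⟩ := dif_pos h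

lemma σ_eq (p : I) : σ p.1.1 p.1.2 = p := by
  rw [σ_of_le p.2]

def ct (c : C) (a b j k : Fin 4) : ℝ := c (σ a b, σ j k)

lemma ct_symm_ab (c : C) (a b j k : Fin 4) : ct c a b j k = ct c b a j k := by
  unfold ct; rw [σ_symm]

lemma ct_symm_jk (c : C) (a b j k : Fin 4) : ct c a b j k = ct c a b k j := by
  unfold ct; rw [σ_symm j k]

def Qf (c : C) : (Fin 4 → ℝ) → Fin 4 → Fin 4 → ℝ :=
  fun x a b => ∑ j, ∑ k, ct c a b j k * (x j * x k)

/-- derivative of the quadratic map -/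
lemma hasFDerivAt_quad (d : Fin 4 → Fin 4 → ℝ) (x : Fin 4 → ℝ) :
    HasFDerivAt (fun y : Fin 4 → ℝ => ∑ j, ∑ k, d j k * (y j * y k))
      (∑ j, ∑ k, d j k • ((proj j : (Fin 4 → ℝ) →L[ℝ] ℝ) x • (proj k : (Fin 4 → ℝ) →L[ℝ] ℝ)
        + (proj k : (Fin 4 → ℝ) →L[ℝ] ℝ) x • (proj j : (Fin 4 → ℝ) →L[ℝ] ℝ))) x := by
  refine HasFDerivAt.fun_sum fun j _ => HasFDerivAt.fun_sum fun k _ => ?_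
  exact ((proj j : (Fin 4 → ℝ) →L[ℝ] ℝ).hasFDerivAt.mul
    (proj k : (Fin 4 → ℝ) →L[ℝ] ℝ).hasFDerivAt).const_mul _

lemma fderiv_inner (d : Fin 4 → Fin 4 → ℝ) (x' v : Fin 4 → ℝ) :
    fderiv ℝ (fun y : Fin 4 → ℝ => ∑ j, ∑ k, d j k * (y j * y k)) x' v
      = ∑ j, ∑ k, d j k * (x' j * v k + x' k * v j) := by
  rw [(hasFDerivAt_quad d x').fderiv]
  simp only [ContinuousLinearMap.sum_apply, ContinuousLinearMap.add_apply,
    ContinuousLinearMap.smul_apply, ContinuousLinearMap.proj_apply, smul_eq_mul]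

lemma hasFDerivAt_lin (e : Fin 4 → Fin 4 → ℝ) (s : Fin 4 → ℝ) (x : Fin 4 → ℝ) :
    HasFDerivAt (fun y : Fin 4 → ℝ => ∑ j, ∑ k, e j k * (y j * s k + y k * s j))
      (∑ j, ∑ k, e j k • (s k • (proj j : (Fin 4 → ℝ) →L[ℝ] ℝ)
        + s j • (proj k : (Fin 4 → ℝ) →L[ℝ] ℝ))) x := by
  refine HasFDerivAt.fun_sum fun j _ => HasFDerivAt.fun_sum fun k _ => ?_
  exact (((proj j : (Fin 4 → ℝ) →L[ℝ] ℝ).hasFDerivAt.mul_const (s k)).add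
    ((proj k : (Fin 4 → ℝ) →L[ℝ] ℝ).hasFDerivAt.mul_const (s j))).const_mul _

lemma pd2_Qf (c : C) (a b i j : Fin 4) (x : Fin 4 → ℝ) :
    pd2V (Qf c) a b i j x = ct c a b i j + ct c a b j i := by
  unfold pd2V
  have e1 : (fun x'' => Qf c x'' a b)
      = fun y : Fin 4 → ℝ => ∑ j', ∑ k', ct c a b j' k' * (y j' * y k') := rfl
  have h1 : (fun x' => fderiv ℝ (fun x'' => Qf c x'' a b) x' (Pi.single i 1))
      = fun x' : Fin 4 → ℝ => ∑ j', ∑ k',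
          ct c a b j' k' * (x' j' * (Pi.single i 1 : Fin 4 → ℝ) k' + x' k' * (Pi.single i 1 : Fin 4 → ℝ) j') := by
    funext x'
    rw [e1, fderiv_inner]
  rw [h1, (hasFDerivAt_lin (fun j' k' => ct c a b j' k') (Pi.single i 1) x).fderiv]
  simp only [ContinuousLinearMap.sum_apply, ContinuousLinearMap.add_apply,
    ContinuousLinearMap.smul_apply, ContinuousLinearMap.proj_apply, smul_eq_mul,
    Pi.single_apply]
  fin_cases i <;> fin_cases j <;>
    simp [Fin.sum_univ_four] <;> ring

end S19


namespace S19

/-- The linear map `c ↦ V`. -/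
def Q : C →ₗ[ℝ] ((Fin 4 → ℝ) → Fin 4 → Fin 4 → ℝ) where
  toFun := Qf
  map_add' c c' := by
    funext x a b
    simp only [Qf, ct, Pi.add_apply]
    rw [← Finset.sum_add_distrib]
    exact Finset.sum_congr rfl fun j _ => by
      rw [← Finset.sum_add_distrib]
      exact Finset.sum_congr rfl fun k _ => by ring
  map_smul' r c := by
    funext x a b
    simp only [Qf, ct, Pi.smul_apply, smul_eq_mul, RingHom.id_apply, Finset.mul_sum]
    exact Finset.sum_congr rfl fun j _ => Finset.sum_congr rfl fun k _ => by ring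

/-- The Jacobi equations as functions of the coefficients. -/
def Ef (c : C) (μ ν : Fin 4) : ℝ :=
  ∑ i, εL i / 2 *
    (ct c ν i i μ + ct c ν i μ i + (ct c μ i i ν + ct c μ i ν i)
      - (ct c i i μ ν + ct c i i ν μ) - (ct c μ ν i i + ct c μ ν i i))

lemma Ef_symm (c : C) (μ ν : Fin 4) : Ef c μ ν = Ef c ν μ := by
  unfold Ef
  refine Finset.sum_congr rfl fun i _ => ?_
  rw [ct_symm_ab c μ ν i i, ct_symm_jk c i i μ ν]
  ring

/-- The Jacobi equations as a linear map. -/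
def E : C →ₗ[ℝ] (I → ℝ) where
  toFun c := fun p => Ef c p.1.1 p.1.2
  map_add' c c' := by
    funext p
    simp only [Ef, ct, Pi.add_apply]
    rw [← Finset.sum_add_distrib]
    exact Finset.sum_congr rfl fun i _ => by ring
  map_smul' r c := by
    funext p
    simp only [Ef, ct, Pi.smul_apply, smul_eq_mul, RingHom.id_apply, Finset.mul_sum]
    exact Finset.sum_congr rfl fun i _ => by ring

@[simp] lemma E_apply (c : C) (p : I) : E c p = Ef c p.1.1 p.1.2 := rfl

lemma Ef_zero_of_E {c : C} (h : E c = 0) (μ ν : Fin 4) : Ef c μ ν = 0 := by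
  rcases le_total μ ν with h' | h'
  · exact congrFun h ⟨(μ, ν), h'⟩
  · rw [Ef_symm]; exact congrFun h ⟨(ν, μ), h'⟩

lemma jacobi_of_E {c : C} (h : E c = 0) : IsJacobiFlat (Qf c) := by
  constructor
  · intro x a b
    exact Finset.sum_congr rfl fun j _ => Finset.sum_congr rfl fun k _ => by
      rw [ct_symm_ab]
  · intro μ ν x
    have h2 := Ef_zero_of_E h μ ν
    simp only [pd2_Qf]
    exact h2

lemma E_of_jacobi {c : C} (h : IsJacobiFlat (Qf c)) : E c = 0 := by
  funext p
  have h2 := h.2 p.1.1 p.1.2 0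
  simp only [pd2_Qf] at h2
  exact h2

lemma Q_injective : Function.Injective (Q : C →ₗ[ℝ] _) := by
  intro c₁ c₂ h
  have h' : Qf c₁ = Qf c₂ := h
  funext pr
  obtain ⟨p, q⟩ := pr
  have hct : ∀ a b i j : Fin 4, ct c₁ a b i j + ct c₁ a b j i
      = ct c₂ a b i j + ct c₂ a b j i := by
    intro a b i j
    rw [← pd2_Qf c₁ a b i j 0, ← pd2_Qf c₂ a b i j 0, h']
  have := hct p.1.1 p.1.2 q.1.1 q.1.2
  rw [ct_symm_jk c₁ p.1.1 p.1.2 q.1.2 q.1.1, ct_symm_jk c₂ p.1.1 p.1.2 q.1.2 q.1.1] at this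
  have h2 : ct c₁ p.1.1 p.1.2 q.1.1 q.1.2 = ct c₂ p.1.1 p.1.2 q.1.1 q.1.2 := by linarith
  unfold ct at h2
  rwa [σ_eq, σ_eq] at h2

end S19

namespace S19

lemma sum_swap_eq (e : Fin 4 → Fin 4 → ℝ) (x : Fin 4 → ℝ) :
    (∑ j, ∑ k, e k j * (x j * x k)) = ∑ j, ∑ k, e j k * (x j * x k) := by
  rw [Finset.sum_comm]
  exact Finset.sum_congr rfl fun j _ => Finset.sum_congr rfl fun k _ => by ring

lemma quad_repr (V : (Fin 4 → ℝ) → Fin 4 → Fin 4 → ℝ)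
    (hsym : ∀ x a b, V x a b = V x b a)
    (d : Fin 4 → Fin 4 → Fin 4 → Fin 4 → ℝ)
    (hd : ∀ x a b, V x a b = ∑ j, ∑ k, d a b j k * x j * x k) :
    ∃ c : C, Q c = V := by
  set c : C := fun pr =>
    (d pr.1.1.1 pr.1.1.2 pr.2.1.1 pr.2.1.2 + d pr.1.1.1 pr.1.1.2 pr.2.1.2 pr.2.1.1
      + d pr.1.1.2 pr.1.1.1 pr.2.1.1 pr.2.1.2 + d pr.1.1.2 pr.1.1.1 pr.2.1.2 pr.2.1.1) / 4
    with hc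
  refine ⟨c, ?_⟩
  have hd' : ∀ (x : Fin 4 → ℝ) (a b : Fin 4),
      (∑ j, ∑ k, d a b j k * (x j * x k)) = V x a b := by
    intro x a b
    rw [hd x a b]
    exact Finset.sum_congr rfl fun j _ => Finset.sum_congr rfl fun k _ => by ring
  have hswap : ∀ (x : Fin 4 → ℝ) (a b : Fin 4),
      (∑ j, ∑ k, d a b k j * (x j * x k)) = V x a b := by
    intro x a b
    rw [sum_swap_eq, hd' x a b]
  -- the key computation for sorted (a,b)
  have main : ∀ (x : Fin 4 → ℝ) (a b : Fin 4), a ≤ b → Qf c x a b = V x a b := by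
    intro x a b hab
    have hctv : ∀ j k : Fin 4, ct c a b j k
        = (d a b j k + d a b k j + d b a j k + d b a k j) / 4 := by
      intro j k
      unfold ct
      rw [σ_of_le hab]
      rcases le_or_gt j k with h | h
      · rw [σ_of_le h]
      · rw [show σ j k = ⟨(k, j), h.le⟩ from dif_neg (not_le.mpr h)]
        show (d a b k j + d a b j k + d b a k j + d b a j k) / 4 = _
        ring
    have expand : Qf c x a b
        = ((∑ j, ∑ k, d a b j k * (x j * x k)) + (∑ j, ∑ k, d a b k j * (x j * x k))
          + (∑ j, ∑ k, d b a j k * (x j * x k)) + (∑ j, ∑ k, d b a k j * (x j * x k))) / 4 := by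
      unfold Qf
      rw [← Finset.sum_add_distrib, ← Finset.sum_add_distrib, ← Finset.sum_add_distrib,
        Finset.sum_div]
      refine Finset.sum_congr rfl fun j _ => ?_
      rw [← Finset.sum_add_distrib, ← Finset.sum_add_distrib, ← Finset.sum_add_distrib,
        Finset.sum_div]
      refine Finset.sum_congr rfl fun k _ => ?_
      rw [hctv j k]
      ring
    rw [expand, hd', hswap, hd', hswap, hsym x b a]
    ring
  funext x a b
  show Qf c x a b = V x a b
  rcases le_total a b with hab | hab
  · exact main x a b hab
  · have h1 : Qf c x a b = Qf c x b a :=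
      Finset.sum_congr rfl fun j _ => Finset.sum_congr rfl fun k _ => by rw [ct_symm_ab]
    rw [h1, main x b a hab, hsym x b a]

end S19

namespace S19

set_option linter.unnecessarySeqFocus false

def ii (a b : Fin 4) (h : a ≤ b := by decide) : I := ⟨(a, b), h⟩

lemma mem01 : Pi.single (ii 0 1) (1:ℝ) ∈ LinearMap.range E := by
  refine ⟨Pi.single ((ii 0 1), (ii 2 2)) (-1), ?_⟩
  funext q
  fin_cases q <;>
    simp (config := { decide := true }) [E_apply, Ef, ct, σ, εL, ii,
      Fin.sum_univ_four, Pi.single_apply] <;> norm_num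

lemma mem02 : Pi.single (ii 0 2) (1:ℝ) ∈ LinearMap.range E := by
  refine ⟨Pi.single ((ii 0 2), (ii 1 1)) (-1), ?_⟩
  funext q
  fin_cases q <;>
    simp (config := { decide := true }) [E_apply, Ef, ct, σ, εL, ii,
      Fin.sum_univ_four, Pi.single_apply] <;> norm_num

lemma mem03 : Pi.single (ii 0 3) (1:ℝ) ∈ LinearMap.range E := by
  refine ⟨Pi.single ((ii 0 3), (ii 1 1)) (-1), ?_⟩
  funext q
  fin_cases q <;>
    simp (config := { decide := true }) [E_apply, Ef, ct, σ, εL, ii,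
      Fin.sum_univ_four, Pi.single_apply] <;> norm_num

lemma mem12 : Pi.single (ii 1 2) (1:ℝ) ∈ LinearMap.range E := by
  refine ⟨Pi.single ((ii 1 2), (ii 3 3)) (-1), ?_⟩
  funext q
  fin_cases q <;>
    simp (config := { decide := true }) [E_apply, Ef, ct, σ, εL, ii,
      Fin.sum_univ_four, Pi.single_apply] <;> norm_num

lemma mem13 : Pi.single (ii 1 3) (1:ℝ) ∈ LinearMap.range E := by
  refine ⟨Pi.single ((ii 1 3), (ii 2 2)) (-1), ?_⟩
  funext q
  fin_cases q <;>
    simp (config := { decide := true }) [E_apply, Ef, ct, σ, εL, ii,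
      Fin.sum_univ_four, Pi.single_apply] <;> norm_num

lemma mem23 : Pi.single (ii 2 3) (1:ℝ) ∈ LinearMap.range E := by
  refine ⟨Pi.single ((ii 2 3), (ii 1 1)) (-1), ?_⟩
  funext q
  fin_cases q <;>
    simp (config := { decide := true }) [E_apply, Ef, ct, σ, εL, ii,
      Fin.sum_univ_four, Pi.single_apply] <;> norm_num

lemma mem00 : Pi.single (ii 0 0) (1:ℝ) ∈ LinearMap.range E := by
  refine ⟨fun pr : I × I => if pr = (ii 0 0, ii 1 1) then (-1:ℝ) else if pr = (ii 1 1, ii 2 2) then (-1/2:ℝ) else if pr = (ii 3 3, ii 1 1) then (-1/2:ℝ) else if pr = (ii 2 2, ii 3 3) then (1/2:ℝ) else 0, ?_⟩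
  funext q
  fin_cases q <;>
    simp (config := { decide := true }) [E_apply, Ef, ct, σ, εL, ii,
      Fin.sum_univ_four, Pi.single_apply] <;> norm_num

lemma mem11 : Pi.single (ii 1 1) (1:ℝ) ∈ LinearMap.range E := by
  refine ⟨fun pr : I × I => if pr = (ii 1 1, ii 2 2) then (-1/2:ℝ) else if pr = (ii 3 3, ii 1 1) then (-1/2:ℝ) else if pr = (ii 2 2, ii 3 3) then (1/2:ℝ) else 0, ?_⟩
  funext q
  fin_cases q <;>
    simp (config := { decide := true }) [E_apply, Ef, ct, σ, εL, ii,
      Fin.sum_univ_four, Pi.single_apply] <;> norm_num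

lemma mem22 : Pi.single (ii 2 2) (1:ℝ) ∈ LinearMap.range E := by
  refine ⟨fun pr : I × I => if pr = (ii 1 1, ii 2 2) then (-1/2:ℝ) else if pr = (ii 2 2, ii 3 3) then (-1/2:ℝ) else if pr = (ii 3 3, ii 1 1) then (1/2:ℝ) else 0, ?_⟩
  funext q
  fin_cases q <;>
    simp (config := { decide := true }) [E_apply, Ef, ct, σ, εL, ii,
      Fin.sum_univ_four, Pi.single_apply] <;> norm_num

lemma mem33 : Pi.single (ii 3 3) (1:ℝ) ∈ LinearMap.range E := by
  refine ⟨fun pr : I × I => if pr = (ii 2 2, ii 3 3) then (-1/2:ℝ) else if pr = (ii 3 3, ii 1 1) then (-1/2:ℝ) else if pr = (ii 1 1, ii 2 2) then (1/2:ℝ) else 0, ?_⟩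
  funext q
  fin_cases q <;>
    simp (config := { decide := true }) [E_apply, Ef, ct, σ, εL, ii,
      Fin.sum_univ_four, Pi.single_apply] <;> norm_num

lemma single_mem (p : I) : Pi.single p (1:ℝ) ∈ LinearMap.range E := by
  fin_cases p <;>
    first
      | exact mem00 | exact mem01 | exact mem02 | exact mem03
      | exact mem11 | exact mem12 | exact mem13
      | exact mem22 | exact mem23 | exact mem33

lemma E_surj : LinearMap.range E = ⊤ := by
  rw [eq_top_iff]
  intro y _
  have hy : y = ∑ p, y p • (Pi.single p 1 : I → ℝ) := by
    funext q
    simp [Finset.sum_apply, Pi.single_apply, mul_ite, Finset.sum_ite_eq]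
  rw [hy]
  exact Submodule.sum_mem _ fun p _ => Submodule.smul_mem _ _ (single_mem p)

lemma card_I : Fintype.card I = 10 := by decide

lemma finrank_ker : Module.finrank ℝ (LinearMap.ker E) = 90 := by
  have h1 := LinearMap.finrank_range_add_finrank_ker E
  rw [E_surj] at h1
  have h2 : Module.finrank ℝ (⊤ : Submodule ℝ (I → ℝ)) = 10 := by
    rw [finrank_top, Module.finrank_fintype_fun_eq_card, card_I]
  have h3 : Module.finrank ℝ C = 100 := by
    rw [Module.finrank_fintype_fun_eq_card]
    simp [Fintype.card_prod, card_I]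
  rw [h2, h3] at h1
  omega

end S19

/-- Example 7.1: for the flat Lorentzian metric
`g = ε_i(dxⁱ)²` on a `4`-dimensional base, the space of Jacobi fields of the
Einstein–Hilbert Lagrangian along `g` whose components are homogeneous quadratic
polynomials in `x¹,…,x⁴` is a vector space of dimension `90`. -/
theorem statement19 :
    ∃ B : Fin 90 → ((Fin 4 → ℝ) → Fin 4 → Fin 4 → ℝ),
      (∀ k, IsJacobiFlat (B k) ∧ IsQuadratic (B k)) ∧
      LinearIndependent ℝ B ∧
      ∀ V : (Fin 4 → ℝ) → Fin 4 → Fin 4 → ℝ,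
        IsJacobiFlat V → IsQuadratic V →
        V ∈ Submodule.span ℝ (Set.range B) := by
  classical
  let b : Module.Basis (Fin 90) ℝ (LinearMap.ker S19.E) :=
    Module.finBasisOfFinrankEq ℝ _ S19.finrank_ker
  refine ⟨fun k => S19.Q (b k : S19.C), ?_, ?_, ?_⟩
  · intro k
    have hE : S19.E (b k : S19.C) = 0 := (b k).2
    constructor
    · exact S19.jacobi_of_E hE
    · refine ⟨fun a b' j k' => S19.ct (b k : S19.C) a b' j k', fun x a b' => ?_⟩
      show S19.Qf ((b k : S19.C)) x a b' = _
      exact Finset.sum_congr rfl fun j _ => Finset.sum_congr rfl fun k' _ =>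
        (mul_assoc _ _ _).symm
  · have hker : LinearMap.ker (S19.Q.comp (LinearMap.ker S19.E).subtype) = ⊥ := by
      rw [LinearMap.ker_eq_bot]
      exact S19.Q_injective.comp Subtype.val_injective
    have h1 := b.linearIndependent.map' (S19.Q.comp (LinearMap.ker S19.E).subtype) hker
    exact h1
  · intro V hJ hQd
    obtain ⟨d, hd⟩ := hQd
    obtain ⟨c, hc⟩ := S19.quad_repr V hJ.1 d hd
    have hE : S19.E c = 0 := by
      apply S19.E_of_jacobi
      have hc' : S19.Qf c = V := hc
      rw [hc']
      exact hJ
    set w : LinearMap.ker S19.E := ⟨c, hE⟩ with hwdef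
    have hw : (∑ k, b.repr w k • b k) = w := b.sum_repr w
    have h2 : c = ∑ k, b.repr w k • ((b k : S19.C)) := by
      have h3 := congrArg (Subtype.val) hw
      simp only [AddSubmonoidClass.coe_finset_sum, SetLike.val_smul] at h3
      exact h3.symm
    have hVsum : V = ∑ k, b.repr w k • S19.Q ((b k : S19.C)) := by
      rw [← hc, h2, map_sum]
      exact Finset.sum_congr rfl fun k _ => by rw [map_smul]
    rw [hVsum]
    exact Submodule.sum_mem _ fun k _ =>
      Submodule.smul_mem _ _ (Submodule.subset_span ⟨k, rfl⟩)
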